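/- With T₁₁ as above, the (3,3) entry of T₁₁⁻¹ equals Z⁻¹ + (B − A²/L)⁻¹, which is strictly greater than the (2,2) entry Z⁻¹; i.e., the asymptotic HCRB on the absolute orientation exceeds the HCRB on the direction, their difference being the relative-orientation bound (B − A²/L)⁻¹. -/

import Mathlib

open Matrix

theorem orientation_hcrb_exceeds_direction (L A Z B : ℝ)
    (hL : 0 < L) (hZ : 0 < Z) (hB : 0 < B) (hA : A ^ 2 < B * L) :
    (!![L, A, -A; A, Z + B, -B; -A, -B, B] : Matrix (Fin 3) (Fin 3) ℝ)⁻¹ 2 2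
      = Z⁻¹ + (B - A ^ 2 / L)⁻¹ ∧
    (!![L, A, -A; A, Z + B, -B; -A, -B, B] : Matrix (Fin 3) (Fin 3) ℝ)⁻¹ 1 1 = Z⁻¹ ∧
    (!![L, A, -A; A, Z + B, -B; -A, -B, B] : Matrix (Fin 3) (Fin 3) ℝ)⁻¹ 1 1 <
      (!![L, A, -A; A, Z + B, -B; -A, -B, B] : Matrix (Fin 3) (Fin 3) ℝ)⁻¹ 2 2 := by
  have hD : 0 < L * B - A ^ 2 := by nlinarith
  have hdet : (!![L, A, -A; A, Z + B, -B; -A, -B, B] : Matrix (Fin 3) (Fin 3) ℝ).det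
      = Z * (L * B - A ^ 2) := by
    simp [Matrix.det_fin_three]; ring
  have hBA : 0 < B - A ^ 2 / L := by
    rw [sub_pos, div_lt_iff₀ hL]; linarith
  have h22 : (!![L, A, -A; A, Z + B, -B; -A, -B, B] : Matrix (Fin 3) (Fin 3) ℝ)⁻¹ 2 2
      = Z⁻¹ + (B - A ^ 2 / L)⁻¹ := by
    rw [Matrix.inv_def, hdet, Matrix.adjugate_fin_three]
    simp only [Matrix.smul_apply, Matrix.cons_val', Matrix.cons_val_zero, Matrix.cons_val_one,
      Matrix.head_cons, Matrix.empty_val', Matrix.cons_val_fin_one, Matrix.head_fin_const,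
      Matrix.cons_val_two, Matrix.tail_cons, smul_eq_mul, Matrix.of_apply, Matrix.cons_val,
      Ring.inverse_eq_inv']
    have hc : (L * B - A ^ 2) * (L * B - A ^ 2)⁻¹ = 1 := mul_inv_cancel₀ hD.ne'
    field_simp [hD.ne', hZ.ne', hL.ne', hBA.ne']
    linear_combination (0 : ℝ) * hc
  have h11 : (!![L, A, -A; A, Z + B, -B; -A, -B, B] : Matrix (Fin 3) (Fin 3) ℝ)⁻¹ 1 1
      = Z⁻¹ := by
    rw [Matrix.inv_def, hdet, Matrix.adjugate_fin_three]
    simp only [Matrix.smul_apply, Matrix.cons_val', Matrix.cons_val_zero, Matrix.cons_val_one,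
      Matrix.head_cons, Matrix.empty_val', Matrix.cons_val_fin_one, Matrix.head_fin_const,
      Matrix.cons_val_two, Matrix.tail_cons, smul_eq_mul, Matrix.of_apply, Matrix.cons_val,
      Ring.inverse_eq_inv']
    have hc : (L * B - A ^ 2) * (L * B - A ^ 2)⁻¹ = 1 := mul_inv_cancel₀ hD.ne'
    field_simp [hD.ne', hZ.ne', hL.ne', hBA.ne']
  refine ⟨h22, h11, ?_⟩
  rw [h11, h22]
  have := inv_pos.mpr hBA
  linarith
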